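/- Let H, R, G, K be real symmetric N×N matrices that pairwise commute, let P be a diagonal real N×N matrix, and assume A := H R Hᵀ + G and P + K are invertible. Set W_mse = (P + K)⁻¹ P R Hᵀ A⁻¹. Then I − W_mse H = (P + K)⁻¹ A⁻¹ R Hᵀ H K + A⁻¹ G. Consequently, for any vector v ∈ ℝ^N with K v = 0 and G v = 0, one has W_mse H v = v. -/
import Mathlib

open Matrix

lemma mul_left_swap {M : Type*} [Semigroup M] {a b : M} (h : a * b = b * a)
    (c : M) : a * (b * c) = b * (a * c) := by
  rw [← mul_assoc, h, mul_assoc]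

lemma inv_comm_aux {N : ℕ} {A B : Matrix (Fin N) (Fin N) ℝ}
    (hAinv : IsUnit A.det) (h : A * B = B * A) : A⁻¹ * B = B * A⁻¹ := by
  have h1 : A⁻¹ * B * (A * A⁻¹) = A⁻¹ * (B * A) * A⁻¹ := by
    simp [mul_assoc]
  rw [Matrix.mul_nonsing_inv A hAinv, mul_one, ← h, ← mul_assoc,
    Matrix.nonsing_inv_mul A hAinv, one_mul] at h1
  exact h1

theorem wiener_bias_identity {N : ℕ}
    (H R G K : Matrix (Fin N) (Fin N) ℝ)
    (hHs : H.IsSymm) (hRs : R.IsSymm) (hGs : G.IsSymm) (hKs : K.IsSymm)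
    (hHR : H * R = R * H) (hHG : H * G = G * H) (hHK : H * K = K * H)
    (hRG : R * G = G * R) (hRK : R * K = K * R) (hGK : G * K = K * G)
    (p : Fin N → ℝ)
    (P : Matrix (Fin N) (Fin N) ℝ) (hP : P = Matrix.diagonal p)
    (A : Matrix (Fin N) (Fin N) ℝ) (hA : A = H * R * Hᵀ + G)
    (hAinv : IsUnit A.det) (hPKinv : IsUnit (P + K).det)
    (Wmse : Matrix (Fin N) (Fin N) ℝ)
    (hW : Wmse = (P + K)⁻¹ * P * R * Hᵀ * A⁻¹) :
    (1 - Wmse * H = (P + K)⁻¹ * A⁻¹ * R * Hᵀ * H * K + A⁻¹ * G) ∧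
      ∀ v : Fin N → ℝ, K.mulVec v = 0 → G.mulVec v = 0 →
        (Wmse * H).mulVec v = v := by
  have hH : Hᵀ = H := hHs
  have hAH : A * H = H * A := by
    subst hA; rw [hH]
    simp only [add_mul, mul_add, mul_assoc, hHR, hHG, hHK, hRG, hRK, hGK,
      mul_left_swap hHR, mul_left_swap hHG, mul_left_swap hHK,
      mul_left_swap hRG, mul_left_swap hRK, mul_left_swap hGK]
  have hAR : A * R = R * A := by
    subst hA; rw [hH]
    simp only [add_mul, mul_add, mul_assoc, hHR, hHG, hHK, hRG, hRK, hGK,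
      mul_left_swap hHR, mul_left_swap hHG, mul_left_swap hHK,
      mul_left_swap hRG, mul_left_swap hRK, mul_left_swap hGK]
  have hAG : A * G = G * A := by
    subst hA; rw [hH]
    simp only [add_mul, mul_add, mul_assoc, hHR, hHG, hHK, hRG, hRK, hGK,
      mul_left_swap hHR, mul_left_swap hHG, mul_left_swap hHK,
      mul_left_swap hRG, mul_left_swap hRK, mul_left_swap hGK]
  have hAK : A * K = K * A := by
    subst hA; rw [hH]
    simp only [add_mul, mul_add, mul_assoc, hHR, hHG, hHK, hRG, hRK, hGK,
      mul_left_swap hHR, mul_left_swap hHG, mul_left_swap hHK,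
      mul_left_swap hRG, mul_left_swap hRK, mul_left_swap hGK]
  have fH := inv_comm_aux hAinv hAH
  have fR := inv_comm_aux hAinv hAR
  have fG := inv_comm_aux hAinv hAG
  have fK := inv_comm_aux hAinv hAK
  have key : R * (H * (H * A⁻¹)) = 1 - G * A⁻¹ := by
    have h5 : R * H * H = A - G := by
      rw [hA, hH, add_sub_cancel_right]
      simp only [mul_assoc, hHR, mul_left_swap hHR]
    rw [← mul_assoc, ← mul_assoc, h5, sub_mul, Matrix.mul_nonsing_inv A hAinv]
  have hPK1 : (P + K)⁻¹ * (P + K) = 1 := Matrix.nonsing_inv_mul _ hPKinv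
  have hWH : Wmse * H = (P + K)⁻¹ * (P * (1 - G * A⁻¹)) := by
    rw [hW, hH, mul_assoc, mul_assoc, mul_assoc, mul_assoc, fH, key]
  have hbias : 1 - Wmse * H = (P + K)⁻¹ * (K + P * (G * A⁻¹)) := by
    rw [hWH, ← hPK1, ← mul_sub]
    congr 1
    rw [mul_sub, hPK1, mul_one]
    abel
  refine ⟨?_, ?_⟩
  · rw [hbias, hH]
    have key2 : R * (H * (H * (A⁻¹ * K))) = K - G * (A⁻¹ * K) := by
      have := congrArg (fun X => X * K) key
      simpa [mul_assoc, sub_mul] using this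
    have h1 : A⁻¹ * (R * (H * (H * K))) = K - G * (A⁻¹ * K) := by
      rw [mul_left_swap fR, mul_left_swap fH, mul_left_swap fH, key2]
    have h2 : A⁻¹ * G = (P + K)⁻¹ * ((P + K) * (A⁻¹ * G)) := by
      rw [← mul_assoc, ← mul_assoc, hPK1, one_mul]
    rw [show (P + K)⁻¹ * A⁻¹ * R * H * H * K
        = (P + K)⁻¹ * (A⁻¹ * (R * (H * (H * K)))) from by simp [mul_assoc],
      h1, h2, ← mul_add]
    congr 1
    rw [add_mul, fK, mul_left_swap hGK, fG]
    abel
  · intro v hKv hGv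
    have h1 := congrArg (fun M => M.mulVec v) hbias
    simp only [Matrix.sub_mulVec, Matrix.one_mulVec] at h1
    have hz : ((P + K)⁻¹ * (K + P * (G * A⁻¹))) *ᵥ v = 0 := by
      simp [← fG, Matrix.add_mulVec, ← Matrix.mulVec_mulVec, hKv, hGv]
    rw [hz] at h1
    exact (sub_eq_zero.mp h1).symm
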